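/- arXiv:1704.01257 — 3 statements merged into one kernel-verified Lean document; each statement's English description precedes it below -/
import Mathlib

section
/- Let K > 0 and N > 0, and let Ψ : [0,∞) → ℝ be continuous on [0,∞) and twice differentiable on (0,∞), with Ψ'(t) < 0 for all t > 0, satisfying Ψ''(t) ≥ −2K·Ψ'(t) + (2/N)·Ψ'(t)² for all t > 0, and such that Ψ'(t) converges to a finite limit D₀ < 0 as t → 0⁺. Then for every t > 0: Ψ(0) − Ψ(t) ≤ (N/2)·log(1 − (1 − e^{−2Kt})·D₀/(K·N)). -/
open Set Filter

/-- Algebraic identity: the derivative of the comparison log-term equals `-R⁻¹`. -/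
lemma entropy_energy_aux_alg (K N D₀ e : ℝ) (hK : K ≠ 0) (hN : N ≠ 0) (hD : D₀ ≠ 0)
    (he : e ≠ 0) (hden : K * N - D₀ + e * D₀ ≠ 0) :
    N / 2 * (-(-(e * (-2 * K)) * D₀ / (K * N)) / (1 - (1 - e) * D₀ / (K * N)))
      = -(e⁻¹ * (D₀⁻¹ - 1 / (K * N)) + 1 / (K * N))⁻¹ := by
  have hg : (1 - (1 - e) * D₀ / (K * N)) = (K * N - D₀ + e * D₀) / (K * N) := by
    field_simp; ring
  have hR : (e⁻¹ * (D₀⁻¹ - 1 / (K * N)) + 1 / (K * N))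
      = (K * N - D₀ + e * D₀) / (e * D₀ * (K * N)) := by
    field_simp
  rw [hg, hR]
  field_simp

/-- The integrated differential inequality from the paper's proof of the logarithmic
entropy-energy inequality (Proposition 6.1): if `Ψ` is continuous on `[0,∞)`, twice
differentiable on `(0,∞)` with `Ψ' < 0` and `Ψ'' ≥ −2K·Ψ' + (2/N)·(Ψ')²` there, and
`Ψ'(t) → D₀ < 0` as `t → 0⁺`, then for every `t > 0`,
`Ψ(0) − Ψ(t) ≤ (N/2)·log(1 − (1 − e^{−2Kt})·D₀/(KN))`. -/
theorem entropy_energy_integrated_inequality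
    (K N D₀ : ℝ) (hK : 0 < K) (hN : 0 < N) (hD₀ : D₀ < 0) (Ψ Ψ' Ψ'' : ℝ → ℝ)
    (hΨcont : ContinuousOn Ψ (Ici 0))
    (hΨ' : ∀ t ∈ Ioi (0 : ℝ), HasDerivAt Ψ (Ψ' t) t)
    (hΨ'' : ∀ t ∈ Ioi (0 : ℝ), HasDerivAt Ψ' (Ψ'' t) t)
    (hneg : ∀ t ∈ Ioi (0 : ℝ), Ψ' t < 0)
    (hineq : ∀ t ∈ Ioi (0 : ℝ), -2 * K * Ψ' t + (2 / N) * (Ψ' t) ^ 2 ≤ Ψ'' t)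
    (hlim : Tendsto Ψ' (nhdsWithin 0 (Ioi 0)) (nhds D₀)) :
    ∀ t ∈ Ioi (0 : ℝ),
      Ψ 0 - Ψ t ≤ (N / 2) * Real.log (1 - (1 - Real.exp (-2 * K * t)) * D₀ / (K * N)) := by
  have hKN : (0:ℝ) < K * N := mul_pos hK hN
  set c : ℝ := 1 / (K * N) with hc
  have hcpos : 0 < c := by positivity
  -- the exponential and its derivative
  set E : ℝ → ℝ := fun s => Real.exp (-2 * K * s) with hEdef
  have hE : ∀ t : ℝ, HasDerivAt E (E t * (-2 * K)) t := by
    intro t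
    have h1 : HasDerivAt (fun s : ℝ => -2 * K * s) (-2 * K) t := by
      simpa using (hasDerivAt_id t).const_mul (-2 * K)
    exact h1.exp
  have hEpos : ∀ t : ℝ, 0 < E t := fun t => Real.exp_pos _
  -- φ = E * (v - c), v = (Ψ')⁻¹
  set φ : ℝ → ℝ := fun s => E s * ((Ψ' s)⁻¹ - c) with hφdef
  have hφ : ∀ t ∈ Ioi (0:ℝ), HasDerivAt φ
      (E t * (-2 * K) * ((Ψ' t)⁻¹ - c) + E t * (-Ψ'' t / Ψ' t ^ 2)) t := by
    intro t ht
    exact (hE t).mul (((hΨ'' t ht).inv (hneg t ht).ne).sub_const c)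
  have hφ' : ∀ t ∈ Ioi (0:ℝ),
      E t * (-2 * K) * ((Ψ' t)⁻¹ - c) + E t * (-Ψ'' t / Ψ' t ^ 2) ≤ 0 := by
    intro t ht
    have hu := hneg t ht
    have hu2 : (0:ℝ) < Ψ' t ^ 2 := pow_two_pos_of_ne_zero hu.ne
    have h1 : -Ψ'' t / Ψ' t ^ 2 ≤ (2 * K * Ψ' t - (2 / N) * Ψ' t ^ 2) / Ψ' t ^ 2 :=
      (div_le_div_iff_of_pos_right hu2).2 (by linarith [hineq t ht])
    have h2 : (2 * K * Ψ' t - (2 / N) * Ψ' t ^ 2) / Ψ' t ^ 2 = 2 * K * (Ψ' t)⁻¹ - 2 / N := by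
      field_simp [hu.ne]
    have h3 : -2 * K * ((Ψ' t)⁻¹ - c) + (2 * K * (Ψ' t)⁻¹ - 2 / N) = 0 := by
      rw [hc]; field_simp [hu.ne]; ring
    nlinarith [hEpos t, mul_le_mul_of_nonneg_left (h1.trans_eq h2) (hEpos t).le]
  -- φ is antitone on (0, ∞)
  have hφanti : AntitoneOn φ (Ioi 0) := by
    apply antitoneOn_of_deriv_nonpos (convex_Ioi 0)
    · exact fun t ht => (hφ t ht).continuousAt.continuousWithinAt
    · rw [interior_Ioi]
      exact fun t ht => (hφ t ht).differentiableAt.differentiableWithinAt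
    · rw [interior_Ioi]
      intro t ht
      rw [(hφ t ht).deriv]
      exact hφ' t ht
  -- φ tends to D₀⁻¹ - c at 0⁺
  have hφlim : Tendsto φ (nhdsWithin 0 (Ioi 0)) (nhds (D₀⁻¹ - c)) := by
    have hEl : Tendsto E (nhdsWithin 0 (Ioi 0)) (nhds 1) := by
      have h : Tendsto E (nhds 0) (nhds (E 0)) := (Real.continuous_exp.comp
        (continuous_const.mul continuous_id)).continuousAt
      have h0 : E 0 = 1 := by simp [hEdef]
      rw [h0] at h
      exact h.mono_left nhdsWithin_le_nhds
    have hvl : Tendsto (fun s => (Ψ' s)⁻¹ - c) (nhdsWithin 0 (Ioi 0)) (nhds (D₀⁻¹ - c)) :=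
      (hlim.inv₀ hD₀.ne).sub tendsto_const_nhds
    simpa using hEl.mul hvl
  -- hence φ t ≤ D₀⁻¹ - c for t > 0
  have hφle : ∀ t ∈ Ioi (0:ℝ), φ t ≤ D₀⁻¹ - c := by
    intro t ht
    refine ge_of_tendsto hφlim ?_
    filter_upwards [Ioo_mem_nhdsGT_of_mem (⟨le_refl 0, ht⟩ : (0:ℝ) ∈ Ico 0 t)] with s hs
    exact hφanti hs.1 ht hs.2.le
  -- the comparison function R
  set R : ℝ → ℝ := fun t => (E t)⁻¹ * (D₀⁻¹ - c) + c with hRdef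
  have hD₀inv : D₀⁻¹ < 0 := inv_neg''.2 hD₀
  have hRneg : ∀ t ∈ Ioi (0:ℝ), R t < 0 := by
    intro t ht
    have ht' : (0:ℝ) < t := ht
    have he1 : 1 < (E t)⁻¹ := by
      rw [hEdef]
      simp only [← Real.exp_neg]
      rw [Real.one_lt_exp_iff]
      nlinarith
    have hRform : R t = (E t)⁻¹ * D₀⁻¹ + (1 - (E t)⁻¹) * c := by rw [hRdef]; ring
    rw [hRform]
    have h1 : (E t)⁻¹ * D₀⁻¹ < 0 := mul_neg_of_pos_of_neg (by positivity) hD₀inv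
    nlinarith
  have hvR : ∀ t ∈ Ioi (0:ℝ), (Ψ' t)⁻¹ ≤ R t := by
    intro t ht
    have h := hφle t ht
    simp only [hφdef] at h
    have hEt := hEpos t
    have h2 : (Ψ' t)⁻¹ - c ≤ (D₀⁻¹ - c) / E t := by
      rw [le_div_iff₀ hEt]
      calc ((Ψ' t)⁻¹ - c) * E t = E t * ((Ψ' t)⁻¹ - c) := by ring
        _ ≤ D₀⁻¹ - c := h
    have h3 : (D₀⁻¹ - c) / E t = (E t)⁻¹ * (D₀⁻¹ - c) := div_eq_inv_mul _ _
    show (Ψ' t)⁻¹ ≤ (E t)⁻¹ * (D₀⁻¹ - c) + c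
    linarith [h2.trans_eq h3]
  -- hence Ψ' t ≥ (R t)⁻¹
  have hΨ'ge : ∀ t ∈ Ioi (0:ℝ), (R t)⁻¹ ≤ Ψ' t := by
    intro t ht
    have h2 : R t < 0 := hRneg t ht
    have h3 : (Ψ' t)⁻¹ < 0 := inv_neg''.2 (hneg t ht)
    have := (inv_le_inv_of_neg h2 h3).2 (hvR t ht)
    simpa using this
  -- the function F and its derivative
  set g : ℝ → ℝ := fun t => 1 - (1 - E t) * D₀ / (K * N) with hgdef
  have hgpos : ∀ t ∈ Ici (0:ℝ), 0 < g t := by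
    intro t ht
    have ht' : (0:ℝ) ≤ t := ht
    have hE1 : E t ≤ 1 := by
      rw [hEdef]; apply Real.exp_le_one_iff.2; nlinarith
    have h1 : (1 - E t) * D₀ ≤ 0 := mul_nonpos_of_nonneg_of_nonpos (by linarith) hD₀.le
    have h2 : (1 - E t) * D₀ / (K * N) ≤ 0 := div_nonpos_of_nonpos_of_nonneg h1 hKN.le
    show (0:ℝ) < 1 - (1 - E t) * D₀ / (K * N)
    linarith
  set F : ℝ → ℝ := fun t => N / 2 * Real.log (g t) with hFdef
  have hgderiv : ∀ t : ℝ, HasDerivAt g (-(-(E t * (-2 * K)) * D₀ / (K * N))) t := by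
    intro t
    exact ((((hE t).const_sub 1).mul_const D₀).div_const (K * N)).const_sub 1
  have hF : ∀ t ∈ Ioi (0:ℝ),
      HasDerivAt F (N / 2 * (-(-(E t * (-2 * K)) * D₀ / (K * N)) / g t)) t := by
    intro t ht
    exact ((hgderiv t).log (hgpos t (mem_Ici.2 (le_of_lt ht))).ne').const_mul (N / 2)
  -- F' t = -(R t)⁻¹
  have hFeq : ∀ t ∈ Ioi (0:ℝ),
      N / 2 * (-(-(E t * (-2 * K)) * D₀ / (K * N)) / g t) = -(R t)⁻¹ := by
    intro t ht
    have hgt := hgpos t (mem_Ici.2 (le_of_lt ht))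
    have hden : K * N - D₀ + E t * D₀ ≠ 0 := by
      have : g t = (K * N - D₀ + E t * D₀) / (K * N) := by
        show 1 - (1 - E t) * D₀ / (K * N) = _
        field_simp; ring
      rw [this] at hgt
      intro h0
      rw [h0] at hgt
      simp at hgt
    have := entropy_energy_aux_alg K N D₀ (E t) hK.ne' hN.ne' hD₀.ne (hEpos t).ne' hden
    rw [hgdef, hRdef, hc]
    exact this
  -- H = Ψ + F is monotone on [0, ∞)
  set H : ℝ → ℝ := fun s => Ψ s + F s with hHdef
  have hH : ∀ t ∈ Ioi (0:ℝ),
      HasDerivAt H (Ψ' t + N / 2 * (-(-(E t * (-2 * K)) * D₀ / (K * N)) / g t)) t := by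
    intro t ht
    exact (hΨ' t ht).add (hF t ht)
  have hH' : ∀ t ∈ Ioi (0:ℝ),
      0 ≤ Ψ' t + N / 2 * (-(-(E t * (-2 * K)) * D₀ / (K * N)) / g t) := by
    intro t ht
    rw [hFeq t ht]
    linarith [hΨ'ge t ht]
  have hEc : Continuous E := by
    rw [hEdef]
    exact Real.continuous_exp.comp (continuous_const.mul continuous_id)
  have hgcont : Continuous g := by
    rw [hgdef]
    exact continuous_const.sub (((continuous_const.sub hEc).mul continuous_const).div_const (K * N))
  have hFcont : ContinuousOn F (Ici 0) :=
    continuousOn_const.mul (hgcont.continuousOn.log fun t ht => (hgpos t ht).ne')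
  have hHmono : MonotoneOn H (Ici 0) := by
    apply monotoneOn_of_deriv_nonneg (convex_Ici 0) (hΨcont.add hFcont)
    · rw [interior_Ici]
      exact fun t ht => (hH t ht).differentiableAt.differentiableWithinAt
    · rw [interior_Ici]
      intro t ht
      change 0 ≤ deriv H t
      rw [(hH t ht).deriv]
      exact hH' t ht
  have hF0 : F 0 = 0 := by
    have hg0 : g 0 = 1 := by
      show 1 - (1 - E 0) * D₀ / (K * N) = 1
      have : E 0 = 1 := by simp [hEdef]
      rw [this]; ring
    rw [hFdef]
    show N / 2 * Real.log (g 0) = 0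
    rw [hg0, Real.log_one, mul_zero]
  -- conclusion
  intro t ht
  have hmem : t ∈ Ici (0:ℝ) := mem_Ici.2 (le_of_lt ht)
  have := hHmono (self_mem_Ici) hmem (le_of_lt ht)
  have hHt : H 0 = Ψ 0 + F 0 := rfl
  have hHt' : H t = Ψ t + F t := rfl
  have hft : F t = N / 2 * Real.log (1 - (1 - Real.exp (-2 * K * t)) * D₀ / (K * N)) := rfl
  rw [hHt, hHt', hF0] at this
  linarith [this, hft.ge, hft.le]
end

section
/- Let N ≥ 2 be a real number and let p ∈ [1, 2(N+1)/N]. Then there exist real numbers a ≥ 0 and b ≥ 0 satisfying the two equations: p − 1 − b/2 = (3b − 2(N+2)a)/(2(N−1)) and (p−2)(b−1) = ((a−b)² − N·a²)/(N−1). -/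
open Set

/-- The algebraic solvability claim in the paper's proof of the sharp Sobolev
inequality (Theorem 5.8): for `N ≥ 2` and `p ∈ [1, 2(N+1)/N]` there exist `a, b ≥ 0`
with `p − 1 − b/2 = (3b − 2(N+2)a)/(2(N−1))` and
`(p−2)(b−1) = ((a−b)² − Na²)/(N−1)`. -/
theorem sobolev_exponent_system_solvable
    (N : ℝ) (hN : 2 ≤ N) (p : ℝ) (hp : p ∈ Icc (1 : ℝ) (2 * (N + 1) / N)) :
    ∃ a b : ℝ, 0 ≤ a ∧ 0 ≤ b ∧
      p - 1 - b / 2 = (3 * b - 2 * (N + 2) * a) / (2 * (N - 1)) ∧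
      (p - 2) * (b - 1) = ((a - b) ^ 2 - N * a ^ 2) / (N - 1) := by
  obtain ⟨hp1, hp2⟩ := hp
  have hNpos : (0:ℝ) < N := by linarith
  have hNp : N * p ≤ 2 * (N + 1) := by
    have := (le_div_iff₀ hNpos).mp hp2
    linarith [this]
  have hX : 0 ≤ N * (p - 1) * (2 * N - (N - 2) * p) := by
    have h1 : 0 ≤ 2 * N - (N - 2) * p := by nlinarith
    have h2 : 0 ≤ N * (p - 1) := by nlinarith
    exact mul_nonneg h2 h1
  set s : ℝ := Real.sqrt (N * (p - 1) * (2 * N - (N - 2) * p)) / (N + 2) with hs_def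
  have hsnn : 0 ≤ s := div_nonneg (Real.sqrt_nonneg _) (by linarith)
  have hs : (Real.sqrt (N * (p - 1) * (2 * N - (N - 2) * p))) ^ 2
      = N * (p - 1) * (2 * N - (N - 2) * p) := Real.sq_sqrt hX
  have hN2 : (N : ℝ) + 2 ≠ 0 := by linarith
  have hN1 : (N : ℝ) - 1 ≠ 0 := by linarith
  refine ⟨(2 * N + 2 - N * p) / (N + 2) + s, 2 * (N + 3 - p) / (N + 2) + 2 * s, ?_, ?_, ?_, ?_⟩
  · have : 0 ≤ (2 * N + 2 - N * p) / (N + 2) := by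
      apply div_nonneg <;> linarith
    linarith
  · have hp3 : p ≤ N + 3 := by nlinarith
    have : 0 ≤ 2 * (N + 3 - p) / (N + 2) := by
      apply div_nonneg <;> linarith
    linarith
  · field_simp
    ring
  · rw [hs_def]
    field_simp
    nlinarith [hs, sq_nonneg (Real.sqrt (N * (p - 1) * (2 * N - (N - 2) * p))),
      Real.sq_sqrt (show 0 ≤ N * (p - 1) * (2 * N - p * (N - 2)) by linarith [hX])]
end

section
/- Let N ≥ 2 be a real number and let p ∈ [1, (7N² + 2N + (N+2)·√(N² + 8N))/(4N(N−1))]. Then there exist real numbers a ≥ 0 and b ≥ 0 satisfying the two equations: p − 1 − b/2 = (3b − 2(N+2)a)/(2(N−1)) and (p−2)(b−1) = ((a−b)² − N·a²)/(N−1). In particular, the admissible range of exponents in the Finsler Sobolev inequality extends from [1, 2(N+1)/N] to [1, (7N² + 2N + (N+2)·√(N² + 8N))/(4N(N−1))], which is still strictly contained in [1, 2N/(N−2)] for N > 2. -/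
open Set

set_option maxHeartbeats 1000000 in
/-- The extended-range claim of the paper's Remark 5.10: for `N ≥ 2` and
`p ∈ [1, (7N² + 2N + (N+2)√(N² + 8N))/(4N(N−1))]` there exist `a, b ≥ 0` solving the
system from the proof of the sharp Sobolev inequality; moreover this extended range
contains `[1, 2(N+1)/N]` and is still strictly contained in `[1, 2N/(N−2)]` for
`N > 2`. -/
theorem sobolev_exponent_system_solvable_extended
    (N : ℝ) (hN : 2 ≤ N) (p : ℝ)
    (hp : p ∈ Icc (1 : ℝ)
      ((7 * N ^ 2 + 2 * N + (N + 2) * Real.sqrt (N ^ 2 + 8 * N)) / (4 * N * (N - 1)))) :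
    (∃ a b : ℝ, 0 ≤ a ∧ 0 ≤ b ∧
      p - 1 - b / 2 = (3 * b - 2 * (N + 2) * a) / (2 * (N - 1)) ∧
      (p - 2) * (b - 1) = ((a - b) ^ 2 - N * a ^ 2) / (N - 1)) ∧
    2 * (N + 1) / N ≤
      (7 * N ^ 2 + 2 * N + (N + 2) * Real.sqrt (N ^ 2 + 8 * N)) / (4 * N * (N - 1)) ∧
    (2 < N →
      (7 * N ^ 2 + 2 * N + (N + 2) * Real.sqrt (N ^ 2 + 8 * N)) / (4 * N * (N - 1)) <
        2 * N / (N - 2)) := by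
  obtain ⟨hp1, hp2⟩ := hp
  have hN0 : (0:ℝ) < N := by linarith
  have hN1 : (0:ℝ) < N - 1 := by linarith
  have hN2 : (0:ℝ) < N + 2 := by linarith
  have hden : (0:ℝ) < 4 * N * (N - 1) := by positivity
  have hS0 : (0:ℝ) ≤ N ^ 2 + 8 * N := by nlinarith
  set s : ℝ := Real.sqrt (N ^ 2 + 8 * N) with hs_def
  have hs2 : s ^ 2 = N ^ 2 + 8 * N := Real.sq_sqrt hS0
  have hs0 : 0 ≤ s := Real.sqrt_nonneg _
  clear_value s
  have hsN : N ≤ s := by nlinarith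
  -- (N-2)*s ≤ N*(N+2)
  have hkey : (N - 2) * s ≤ N * (N + 2) := by nlinarith [sq_nonneg ((N-2)*s - N*(N+2)), sq_nonneg ((N-2)*s + N*(N+2)), mul_nonneg (by linarith : (0:ℝ) ≤ N - 2) hs0]
  refine ⟨?_, ?_, ?_⟩
  · -- the system is solvable
    obtain ⟨t, rfl⟩ : ∃ t, p = 1 + t := ⟨p - 1, by ring⟩
    have ht0 : 0 ≤ t := by linarith
    have htup : 4 * N * (N - 1) * t ≤ (N + 2) * (3 * N + s) := by
      have h := (le_div_iff₀ hden).mp hp2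
      nlinarith
    -- (N-2) * t ≤ N + 2
    have htb : (N - 2) * t ≤ N + 2 := by
      nlinarith [mul_le_mul_of_nonneg_left htup (by linarith : (0:ℝ) ≤ N - 2),
        mul_le_mul_of_nonneg_left hkey (by linarith : (0:ℝ) ≤ N + 2)]
    have hP0 : (0:ℝ) ≤ N * t * (N + 2 - (N - 2) * t) := by
      have : (0:ℝ) ≤ N + 2 - (N - 2) * t := by linarith
      positivity
    set r : ℝ := Real.sqrt (N * t * (N + 2 - (N - 2) * t)) with hr_def
    have hr2 : r ^ 2 = N * t * (N + 2 - (N - 2) * t) := Real.sq_sqrt hP0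
    have hr0 : 0 ≤ r := Real.sqrt_nonneg _
    have hA : 0 ≤ N + 2 + r - N * t := by
      rcases le_or_gt (N * t) (N + 2) with h | h
      · linarith
      · -- need r ≥ N*t - (N+2); uses Q(t) ≤ 0
        have htlow : (N + 2) * (3 * N - s) ≤ 4 * N * (N - 1) * t := by
          nlinarith
        have hQ : 2 * N * (N - 1) * t ^ 2 - 3 * N * (N + 2) * t + (N + 2) ^ 2 ≤ 0 := by
          nlinarith [mul_nonneg (sub_nonneg.mpr htlow) (sub_nonneg.mpr htup), hs2]
        have h1 : (N * t - (N + 2)) ^ 2 ≤ N * t * (N + 2 - (N - 2) * t) := by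
          nlinarith [hQ]
        have h2 := Real.sqrt_le_sqrt h1
        rw [Real.sqrt_sq (by linarith)] at h2
        rw [hr_def]
        linarith
    refine ⟨(N + 2 + r - N * t) / (N + 2), (2 * (N + 2) + 2 * r - 2 * t) / (N + 2),
      div_nonneg hA (le_of_lt hN2), div_nonneg (by nlinarith [mul_nonneg (le_of_lt hN1) ht0] : (0:ℝ) ≤ 2 * (N + 2) + 2 * r - 2 * t) (le_of_lt hN2), ?_, ?_⟩
    · field_simp
      ring
    · rw [eq_div_iff (ne_of_gt hN1)]
      field_simp
      linear_combination (N - 1) * hr2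
  · -- 2(N+1)/N ≤ P(N)
    rw [div_le_div_iff₀ hN0 hden]
    nlinarith
  · intro hN2'
    rw [div_lt_div_iff₀ hden (by linarith : (0:ℝ) < N - 2)]
    have hstrict : (N - 2) * s < N * (N + 2) := by
      nlinarith [mul_nonneg (by linarith : (0:ℝ) ≤ N - 2) hs0]
    nlinarith
end
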